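/- arXiv:2310.20507 — 4 statements merged into one kernel-verified Lean document; each statement's English description precedes it below -/
import Mathlib

section
/- Let (X, μ) be a measure space and let v, η : X → ℝ be measurable functions with ∫ v² dμ < ∞ and ∫ η² dμ < ∞. Then the following two statements are equivalent: (i) v ≤ 0 holds μ-a.e. and for every measurable w : X → ℝ with ∫ w² dμ < ∞ and w ≤ 0 μ-a.e. one has ∫ η·(w − v) dμ ≤ 0; (ii) η ≥ 0 μ-a.e., v ≤ 0 μ-a.e., and η·v = 0 μ-a.e. -/
open MeasureTheory

private lemma l2_mul_integrable {X : Type*} [MeasurableSpace X] {μ : Measure X} {f g : X → ℝ}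
    (hf : MemLp f 2 μ) (hg : MemLp g 2 μ) : Integrable (fun x => f x * g x) μ := by
  have h : MemLp (f • g) 1 μ := hg.smul hf (hpqr := ⟨by
    rw [ENNReal.inv_two_add_inv_two, inv_one]⟩)
  rw [memLp_one_iff_integrable] at h
  simpa [Pi.smul_apply, smul_eq_mul, Pi.mul_def] using h

/-- Pointwise characterization of the subdifferential in `L²(μ)` of the constraint
functional `ψ(v) = 0` if `v ≤ 0` a.e., `+∞` otherwise. -/
theorem stmt2 {X : Type*} [MeasurableSpace X] (μ : Measure X)
    (v η : X → ℝ) (hv : Measurable v) (hη : Measurable η)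
    (hv2 : MemLp v 2 μ) (hη2 : MemLp η 2 μ) :
    ((∀ᵐ x ∂μ, v x ≤ 0) ∧
      ∀ w : X → ℝ, Measurable w → MemLp w 2 μ → (∀ᵐ x ∂μ, w x ≤ 0) →
        ∫ x, η x * (w x - v x) ∂μ ≤ 0) ↔
    ((∀ᵐ x ∂μ, 0 ≤ η x) ∧ (∀ᵐ x ∂μ, v x ≤ 0) ∧ (∀ᵐ x ∂μ, η x * v x = 0)) := by
  have hint : Integrable (fun x => η x * v x) μ := l2_mul_integrable hη2 hv2
  constructor
  · rintro ⟨hvle, hsub⟩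
    -- Step 1: η ≥ 0 a.e., using w = v + min η 0
    set m : X → ℝ := fun x => min (η x) 0 with hm
    have hmmeas : Measurable m := hη.min measurable_const
    have hm2 : MemLp m 2 μ := by
      refine MemLp.of_le hη2 hmmeas.aestronglyMeasurable ?_
      filter_upwards with x
      simp only [hm, Real.norm_eq_abs]
      rcases le_total (η x) 0 with h | h
      · simp [min_eq_left h]
      · simp [min_eq_right h, abs_nonneg]
    have hw1 : MemLp (fun x => v x + m x) 2 μ := hv2.add hm2
    have hw1le : ∀ᵐ x ∂μ, v x + m x ≤ 0 := by
      filter_upwards [hvle] with x hx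
      have : m x ≤ 0 := min_le_right _ _
      linarith
    have h1 := hsub (fun x => v x + m x) (hv.add hmmeas) hw1 hw1le
    have heq1 : (fun x => η x * (v x + m x - v x)) = fun x => (m x) ^ 2 := by
      funext x
      simp only [hm, add_sub_cancel_left]
      rcases le_total (η x) 0 with h | h
      · rw [min_eq_left h]; ring
      · rw [min_eq_right h]; ring
    rw [heq1] at h1
    have hm2int : Integrable (fun x => (m x) ^ 2) μ := by
      have := l2_mul_integrable hm2 hm2
      simpa [pow_two] using this
    have hmz : ∀ᵐ x ∂μ, (m x) ^ 2 = 0 := by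
      have hle : ∫ x, (m x) ^ 2 ∂μ = 0 :=
        le_antisymm h1 (integral_nonneg fun x => sq_nonneg _)
      have := (integral_eq_zero_iff_of_nonneg (fun x => sq_nonneg (m x)) hm2int).mp hle
      filter_upwards [this] with x hx using hx
    have hηnn : ∀ᵐ x ∂μ, 0 ≤ η x := by
      filter_upwards [hmz] with x hx
      have : m x = 0 := by
        have := sq_eq_zero_iff.mp hx
        exact this
      simp only [hm] at this
      by_contra hneg
      push_neg at hneg
      rw [min_eq_left hneg.le] at this
      exact absurd this hneg.ne
    -- Step 2: ∫ η v = 0, using w = 0 and w = 2v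
    have h0 := hsub (fun _ => 0) measurable_const (MemLp.zero')
      (Filter.Eventually.of_forall fun _ => le_refl 0)
    have h2 := hsub (fun x => 2 * v x) (hv.const_mul 2) (hv2.const_mul 2)
      (by filter_upwards [hvle] with x hx; linarith)
    have e0 : ∫ x, η x * ((0:ℝ) - v x) ∂μ = - ∫ x, η x * v x ∂μ := by
      rw [← integral_neg]
      congr 1; funext x; ring
    have e2 : ∫ x, η x * (2 * v x - v x) ∂μ = ∫ x, η x * v x ∂μ := by
      congr 1; funext x; ring
    rw [e0] at h0
    rw [e2] at h2
    have hiz : ∫ x, η x * v x ∂μ = 0 := le_antisymm h2 (by linarith)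
    -- η v ≤ 0 a.e. and integral zero ⇒ η v = 0 a.e.
    have hnp : ∀ᵐ x ∂μ, 0 ≤ -(η x * v x) := by
      filter_upwards [hηnn, hvle] with x h1 h2
      nlinarith
    have hniz : ∫ x, -(η x * v x) ∂μ = 0 := by
      rw [integral_neg, hiz, neg_zero]
    have := (integral_eq_zero_iff_of_nonneg_ae hnp hint.neg).mp hniz
    refine ⟨hηnn, hvle, ?_⟩
    filter_upwards [this] with x hx
    have : -(η x * v x) = 0 := hx
    linarith
  · rintro ⟨hηnn, hvle, hzero⟩
    refine ⟨hvle, fun w hwmeas hw2 hwle => ?_⟩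
    have hintw : Integrable (fun x => η x * w x) μ := l2_mul_integrable hη2 hw2
    have heq : ∀ᵐ x ∂μ, η x * (w x - v x) = η x * w x := by
      filter_upwards [hzero] with x hx
      rw [mul_sub, hx, sub_zero]
    rw [integral_congr_ae heq]
    refine integral_nonpos_of_ae ?_
    filter_upwards [hηnn, hwle] with x h1 h2
    exact mul_nonpos_of_nonneg_of_nonpos h1 h2
end

section
/- Let B be a real Banach space, T > 0, m ∈ ℕ with m ≥ 1, τ := T/m and t_k := k·τ for k = 0, …, m. Let g : [0,T] → B be Bochner integrable and let f : [0,T] → B satisfy f(t) = f(0) + ∫₀ᵗ g(s) ds for all t ∈ [0,T]. Define f_k := (1/τ)·∫_{t_{k−1}}^{t_k} f(s) ds for k = 1, …, m and f₀ := f(0). Then ‖f₁ − f₀‖_B ≤ ∫₀^{τ} ‖g(r)‖_B dr, and for every k with 2 ≤ k ≤ m, ‖f_k − f_{k−1}‖_B ≤ ∫_{t_{k−2}}^{t_k} ‖g(r)‖_B dr. -/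
open MeasureTheory intervalIntegral

lemma avg_sub_pt {B : Type*} [NormedAddCommGroup B] [NormedSpace ℝ B] [CompleteSpace B]
    {T : ℝ} (g f : ℝ → B)
    (hg : IntegrableOn g (Set.Icc 0 T))
    (hf : ∀ t ∈ Set.Icc (0 : ℝ) T, f t = f 0 + ∫ s in (0 : ℝ)..t, g s)
    {a b c : ℝ} (h0a : 0 ≤ a) (hab : a < b) (hbT : b ≤ T) (hac : a ≤ c) (hcb : c ≤ b) :
    ‖(1 / (b - a)) • (∫ s in a..b, f s) - f c‖ ≤ ∫ r in a..b, ‖g r‖ := by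
  have h0T : (0:ℝ) ≤ T := h0a.trans (hab.le.trans hbT)
  have hgI : ∀ u v : ℝ, 0 ≤ u → u ≤ v → v ≤ T → IntervalIntegrable g volume u v := by
    intro u v hu huv hv
    exact (hg.mono_set (by rw [Set.uIcc_of_le huv]; exact Set.Icc_subset_Icc hu hv)).intervalIntegrable
  -- f s - f c = ∫ c..s g for s, c in [0,T]
  have key : ∀ s ∈ Set.Icc a b, f s - f c = ∫ r in c..s, g r := by
    intro s hs
    have hs0T : s ∈ Set.Icc (0:ℝ) T := ⟨h0a.trans hs.1, hs.2.trans hbT⟩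
    have hc0T : c ∈ Set.Icc (0:ℝ) T := ⟨h0a.trans hac, hcb.trans hbT⟩
    rw [hf s hs0T, hf c hc0T]
    have h1 : IntervalIntegrable g volume 0 c := hgI 0 c le_rfl hc0T.1 hc0T.2
    have h2 : IntervalIntegrable g volume c s := by
      rcases le_total c s with h | h
      · exact hgI c s hc0T.1 h hs0T.2
      · exact (hgI s c hs0T.1 h hc0T.2).symm
    have := integral_add_adjacent_intervals h1 h2
    rw [← this]; abel
  -- f is integrable on [a,b]
  have hfi : IntervalIntegrable f volume a b := by
    have hcont : ContinuousOn (fun x => f 0 + ∫ t in (0:ℝ)..x, g t) (Set.Icc 0 T) := by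
      have := continuousOn_primitive_interval (a := (0:ℝ)) (b := T) (μ := volume) (f := g)
        (by rwa [Set.uIcc_of_le h0T])
      rw [Set.uIcc_of_le h0T] at this
      exact continuousOn_const.add this
    have : IntegrableOn f (Set.Icc a b) := by
      apply IntegrableOn.congr_fun _ (fun x hx => (hf x ⟨h0a.trans hx.1, hx.2.trans hbT⟩).symm)
        measurableSet_Icc
      exact (hcont.mono (Set.Icc_subset_Icc h0a hbT)).integrableOn_Icc
    rw [← Set.uIcc_of_le hab.le] at this
    exact this.intervalIntegrable
  -- rewrite difference as average of (f s - f c)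
  have hba : (0:ℝ) < b - a := by linarith
  have heq : (1 / (b - a)) • (∫ s in a..b, f s) - f c
      = (1 / (b - a)) • ∫ s in a..b, (f s - f c) := by
    rw [integral_sub hfi intervalIntegrable_const, intervalIntegral.integral_const, smul_sub, smul_smul]
    rw [one_div, inv_mul_cancel₀ hba.ne', one_smul]
  rw [heq]
  have hC0 : 0 ≤ ∫ r in a..b, ‖g r‖ := integral_nonneg hab.le (fun _ _ => norm_nonneg _)
  have hbound : ‖∫ s in a..b, (f s - f c)‖ ≤ (∫ r in a..b, ‖g r‖) * |b - a| := by
    apply intervalIntegral.norm_integral_le_of_norm_le_const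
    intro x hx
    rw [Set.uIoc_of_le hab.le] at hx
    have hx' : x ∈ Set.Icc a b := ⟨hx.1.le, hx.2⟩
    rw [key x hx']
    calc ‖∫ r in c..x, g r‖ ≤ |∫ r in c..x, ‖g r‖| := norm_integral_le_abs_integral_norm
      _ ≤ |∫ r in a..b, ‖g r‖| := by
          apply abs_integral_mono_interval
          · rw [Set.uIoc_of_le hab.le]
            exact Set.Ioc_subset_Ioc (le_min hac hx.1.le) (max_le hcb hx'.2)
          · exact Filter.Eventually.of_forall (fun _ => norm_nonneg _)
          · exact (hgI a b h0a hab.le hbT).norm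
      _ = ∫ r in a..b, ‖g r‖ := abs_of_nonneg hC0
  rw [norm_smul, norm_div, norm_one, Real.norm_eq_abs, abs_of_pos hba]
  calc 1 / (b - a) * ‖∫ s in a..b, (f s - f c)‖
      ≤ 1 / (b - a) * ((∫ r in a..b, ‖g r‖) * |b - a|) := by
        apply mul_le_mul_of_nonneg_left hbound (by positivity)
    _ = ∫ r in a..b, ‖g r‖ := by
        rw [abs_of_pos hba]; field_simp

/-- Estimates on the differences of local averages `f_k` of `f` over the uniform
partition of `[0,T]`, where `f` is the indefinite Bochner integral of `g`. -/
theorem stmt8 {B : Type*} [NormedAddCommGroup B] [NormedSpace ℝ B] [CompleteSpace B]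
    (T : ℝ) (hT : 0 < T) (m : ℕ) (hm : 1 ≤ m) (g f : ℝ → B)
    (hg : IntegrableOn g (Set.Icc 0 T))
    (hf : ∀ t ∈ Set.Icc (0 : ℝ) T, f t = f 0 + ∫ s in (0 : ℝ)..t, g s) :
    let τ : ℝ := T / m
    let fk : ℕ → B := fun k =>
      if k = 0 then f 0 else (1 / τ) • ∫ s in (((k : ℝ) - 1) * τ)..((k : ℝ) * τ), f s
    (‖fk 1 - fk 0‖ ≤ ∫ r in (0 : ℝ)..τ, ‖g r‖) ∧
      ∀ k : ℕ, 2 ≤ k → k ≤ m →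
        ‖fk k - fk (k - 1)‖ ≤ ∫ r in (((k : ℝ) - 2) * τ)..((k : ℝ) * τ), ‖g r‖ := by
  intro τ fk
  have hm' : (0:ℝ) < m := by exact_mod_cast Nat.lt_of_lt_of_le Nat.zero_lt_one hm
  have hτ : 0 < τ := div_pos hT hm'
  have hkT : ∀ k : ℕ, k ≤ m → (k:ℝ) * τ ≤ T := by
    intro k hk
    have : (k:ℝ) ≤ m := by exact_mod_cast hk
    calc (k:ℝ) * τ ≤ (m:ℝ) * τ := by nlinarith
      _ = T := by show (m:ℝ) * (T / m) = T; field_simp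
  constructor
  · have h := avg_sub_pt g f hg hf (a := 0) (b := τ) (c := 0) le_rfl hτ
      (by simpa using hkT 1 hm) le_rfl hτ.le
    simp only [fk, if_neg one_ne_zero, if_pos rfl]
    simpa using h
  · intro k hk2 hkm
    have hk1 : 1 ≤ k := le_trans (by norm_num) hk2
    have hc2 : (2:ℝ) ≤ (k:ℝ) := by exact_mod_cast hk2
    have ht0 : 0 ≤ ((k:ℝ) - 2) * τ := mul_nonneg (by linarith) hτ.le
    have hT2 : (k:ℝ) * τ ≤ T := hkT k hkm
    have hcast : ((k - 1 : ℕ) : ℝ) = (k:ℝ) - 1 := by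
      push_cast [hk1]; ring
    have hfkk1 : fk (k - 1) = (1 / τ) • ∫ s in (((k:ℝ) - 2) * τ)..(((k:ℝ) - 1) * τ), f s := by
      simp only [fk, if_neg (Nat.sub_ne_zero_of_lt (Nat.lt_of_lt_of_le Nat.one_lt_two hk2)), hcast]
      rw [show ((k:ℝ) - 1 - 1) = (k:ℝ) - 2 from by ring]
    have hfkk : fk k = (1 / τ) • ∫ s in (((k:ℝ) - 1) * τ)..((k:ℝ) * τ), f s := by
      simp only [fk, if_neg (by omega : k ≠ 0)]
    -- two applications of the lemma at point c = (k-1)τ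
    have h1 : ‖fk k - f (((k:ℝ) - 1) * τ)‖ ≤ ∫ r in (((k:ℝ)-1)*τ)..((k:ℝ)*τ), ‖g r‖ := by
      rw [hfkk]
      have := avg_sub_pt g f hg hf (a := ((k:ℝ)-1)*τ) (b := (k:ℝ)*τ) (c := ((k:ℝ)-1)*τ)
        (mul_nonneg (by linarith) hτ.le) (by nlinarith) hT2 le_rfl (by nlinarith)
      have hd : (k:ℝ)*τ - ((k:ℝ)-1)*τ = τ := by ring
      rwa [hd] at this
    have h2 : ‖f (((k:ℝ) - 1) * τ) - fk (k-1)‖ ≤ ∫ r in (((k:ℝ)-2)*τ)..(((k:ℝ)-1)*τ), ‖g r‖ := by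
      rw [hfkk1, norm_sub_rev]
      have := avg_sub_pt g f hg hf (a := ((k:ℝ)-2)*τ) (b := ((k:ℝ)-1)*τ) (c := ((k:ℝ)-1)*τ)
        ht0 (by nlinarith) (by nlinarith) (by nlinarith) le_rfl
      have hd : ((k:ℝ)-1)*τ - ((k:ℝ)-2)*τ = τ := by ring
      rwa [hd] at this
    have hsplit : (∫ r in (((k:ℝ)-2)*τ)..(((k:ℝ)-1)*τ), ‖g r‖)
        + (∫ r in (((k:ℝ)-1)*τ)..((k:ℝ)*τ), ‖g r‖)
        = ∫ r in (((k:ℝ)-2)*τ)..((k:ℝ)*τ), ‖g r‖ := by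
      apply integral_add_adjacent_intervals
      · exact (MeasureTheory.IntegrableOn.mono_set hg.norm (by
          rw [Set.uIcc_of_le (by nlinarith : ((k:ℝ)-2)*τ ≤ ((k:ℝ)-1)*τ)]
          exact Set.Icc_subset_Icc ht0 (by nlinarith))).intervalIntegrable
      · exact (MeasureTheory.IntegrableOn.mono_set hg.norm (by
          rw [Set.uIcc_of_le (by nlinarith : ((k:ℝ)-1)*τ ≤ (k:ℝ)*τ)]
          exact Set.Icc_subset_Icc (by nlinarith) hT2)).intervalIntegrable
    calc ‖fk k - fk (k-1)‖
        ≤ ‖fk k - f (((k:ℝ)-1)*τ)‖ + ‖f (((k:ℝ)-1)*τ) - fk (k-1)‖ := norm_sub_le_norm_sub_add_norm_sub _ _ _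
      _ ≤ (∫ r in (((k:ℝ)-1)*τ)..((k:ℝ)*τ), ‖g r‖) + (∫ r in (((k:ℝ)-2)*τ)..(((k:ℝ)-1)*τ), ‖g r‖) := add_le_add h1 h2
      _ = _ := by rw [add_comm, hsplit]
end

section
/- Let B be a real Banach space, 1 ≤ p < ∞, T > 0, m ∈ ℕ with m ≥ 1, τ := T/m and t_k := k·τ for k = 0, …, m. Let g : [0,T] → B be Bochner integrable with ∫₀^T ‖g(t)‖_B^p dt < ∞, and let f : [0,T] → B satisfy f(t) = f(0) + ∫₀ᵗ g(s) ds for all t ∈ [0,T]. Define f_k := (1/τ)·∫_{t_{k−1}}^{t_k} f(s) ds for k = 1, …, m and f₀ := f(0). Then τ·Σ_{k=1}^m ‖(f_k − f_{k−1})/τ‖_B^p ≤ 2^p·∫₀^T ‖g(t)‖_B^p dt. -/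
set_option maxHeartbeats 1000000


open MeasureTheory intervalIntegral

lemma jensen_aux {g : ℝ → ℝ} (p : ℝ) (hp : 1 ≤ p) {a b : ℝ} (hab : a ≤ b)
    (hgi : IntegrableOn g (Set.Ioc a b))
    (hg0 : ∀ t, 0 ≤ g t)
    (hgp : IntegrableOn (fun t => g t ^ p) (Set.Ioc a b)) :
    (∫ t in a..b, g t) ^ p ≤ (b - a) ^ (p - 1) * ∫ t in a..b, g t ^ p := by
  rcases eq_or_lt_of_le hp with hp1 | hp1
  · subst hp1
    simp [Real.rpow_one]
  · set q : ℝ := p / (p - 1) with hq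
    have hpq : p.HolderConjugate q := Real.HolderConjugate.conjExponent hp1
    set μ : Measure ℝ := volume.restrict (Set.Ioc a b) with hμ
    haveI : IsFiniteMeasure μ := by
      constructor
      rw [hμ, Measure.restrict_apply_univ]
      exact measure_Ioc_lt_top
    have hmemg : MemLp g (ENNReal.ofReal p) μ := by
      have hmeas : AEStronglyMeasurable g μ := hgi.aestronglyMeasurable
      have h2 := (memLp_norm_rpow_iff (q := ENNReal.ofReal p) (p := ENNReal.ofReal p)
        hmeas (by simp only [ne_eq, ENNReal.ofReal_eq_zero, not_le]; linarith) (by simp)).mp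
      rw [ENNReal.div_self (by simp only [ne_eq, ENNReal.ofReal_eq_zero, not_le]; linarith)
        (by simp)] at h2
      apply h2
      rw [memLp_one_iff_integrable]
      have h3 : (fun x => ‖g x‖ ^ (ENNReal.ofReal p).toReal) = fun t => g t ^ p := by
        funext x
        rw [ENNReal.toReal_ofReal (by linarith), Real.norm_of_nonneg (hg0 x)]
      rw [h3]
      exact hgp
    have hmem1 : MemLp (fun _ : ℝ => (1:ℝ)) (ENNReal.ofReal q) μ := memLp_const 1
    have H := integral_mul_le_Lp_mul_Lq_of_nonneg hpq
      (f := g) (g := fun _ => (1:ℝ)) (μ := μ)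
      (Filter.Eventually.of_forall hg0) (Filter.Eventually.of_forall fun _ => zero_le_one)
      hmemg hmem1
    simp only [mul_one] at H
    have h1q : ∫ _x : ℝ, (1:ℝ) ^ q ∂μ = b - a := by
      simp only [Real.one_rpow]
      rw [hμ, setIntegral_const, smul_eq_mul, mul_one, Real.volume_real_Ioc_of_le hab]
    rw [h1q] at H
    rw [integral_of_le hab, integral_of_le hab]
    have hint_nonneg : 0 ≤ ∫ t in Set.Ioc a b, g t :=
      integral_nonneg fun x => hg0 x
    have hintp_nonneg : 0 ≤ ∫ t in Set.Ioc a b, g t ^ p :=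
      integral_nonneg fun x => Real.rpow_nonneg (hg0 x) p
    have hp0 : (0:ℝ) < p := by linarith
    calc (∫ t in Set.Ioc a b, g t) ^ p
        ≤ ((∫ t in Set.Ioc a b, g t ^ p) ^ (1/p) * (b - a) ^ (1/q)) ^ p := by
          exact Real.rpow_le_rpow hint_nonneg H (by linarith)
      _ = (b - a) ^ (p - 1) * ∫ t in Set.Ioc a b, g t ^ p := by
          rw [Real.mul_rpow (Real.rpow_nonneg hintp_nonneg _) (Real.rpow_nonneg (by linarith) _),
            ← Real.rpow_mul hintp_nonneg, ← Real.rpow_mul (by linarith : (0:ℝ) ≤ b - a),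
            one_div_mul_cancel hp0.ne', Real.rpow_one]
          have : 1/q * p = p - 1 := by
            rw [hq, one_div_div, div_mul_eq_mul_div, mul_div_assoc, div_self hp0.ne', mul_one]
          rw [this, mul_comm]

noncomputable def Eint {B : Type*} [NormedAddCommGroup B] (g : ℝ → B) (p τ : ℝ) (k : ℕ) : ℝ :=
  ∫ t in ((((k:ℝ) - 2) ⊔ 0) * τ)..((k:ℝ) * τ), ‖g t‖ ^ p

noncomputable def Jint {B : Type*} [NormedAddCommGroup B] (g : ℝ → B) (p τ : ℝ) (j : ℕ) : ℝ :=
  if j = 0 then 0 else ∫ t in (((j:ℝ) - 1) * τ)..((j:ℝ) * τ), ‖g t‖ ^ p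


/-- Proposition A.1: `L^p` estimate for the difference quotients of the local
averages `f_k` of `f`, where `f` is the indefinite Bochner integral of `g` and
`‖g‖_B ∈ L^p(0,T)`. -/
theorem stmt9 {B : Type*} [NormedAddCommGroup B] [NormedSpace ℝ B] [CompleteSpace B]
    (p : ℝ) (hp : 1 ≤ p) (T : ℝ) (hT : 0 < T) (m : ℕ) (hm : 1 ≤ m) (g f : ℝ → B)
    (hg : IntegrableOn g (Set.Icc 0 T))
    (hgp : IntegrableOn (fun t => ‖g t‖ ^ p) (Set.Icc 0 T))
    (hf : ∀ t ∈ Set.Icc (0 : ℝ) T, f t = f 0 + ∫ s in (0 : ℝ)..t, g s) :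
    let τ : ℝ := T / m
    let fk : ℕ → B := fun k =>
      if k = 0 then f 0 else (1 / τ) • ∫ s in (((k : ℝ) - 1) * τ)..((k : ℝ) * τ), f s
    τ * ∑ k ∈ Finset.Icc 1 m, ‖(1 / τ) • (fk k - fk (k - 1))‖ ^ p ≤
      (2 : ℝ) ^ p * ∫ t in (0 : ℝ)..T, ‖g t‖ ^ p := by
  intro τ fk
  have hfk : fk = fun k : ℕ =>
      if k = 0 then f 0 else (1 / τ) • ∫ s in (((k : ℝ) - 1) * τ)..((k : ℝ) * τ), f s := rfl
  have hm0 : (0:ℝ) < (m:ℝ) := by exact_mod_cast Nat.lt_of_lt_of_le Nat.zero_lt_one hm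
  have hτ : 0 < τ := div_pos hT hm0
  have hmτ : (m:ℝ) * τ = T := by
    show (m:ℝ) * (T / (m:ℝ)) = T
    field_simp
  -- integrability helpers
  have hgi : ∀ a b : ℝ, 0 ≤ a → a ≤ b → b ≤ T → IntervalIntegrable g volume a b := by
    intro a b h1 h2 h3
    exact (hg.mono_set (by rw [Set.uIcc_of_le h2]; exact Set.Icc_subset_Icc h1 h3)).intervalIntegrable
  have hgn : IntegrableOn (fun t => ‖g t‖) (Set.Icc 0 T) := hg.norm
  have hgni : ∀ a b : ℝ, 0 ≤ a → a ≤ b → b ≤ T →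
      IntervalIntegrable (fun t => ‖g t‖) volume a b := by
    intro a b h1 h2 h3
    exact (hgn.mono_set (by rw [Set.uIcc_of_le h2]; exact Set.Icc_subset_Icc h1 h3)).intervalIntegrable
  have hgpi : ∀ a b : ℝ, 0 ≤ a → a ≤ b → b ≤ T →
      IntervalIntegrable (fun t => ‖g t‖ ^ p) volume a b := by
    intro a b h1 h2 h3
    exact (hgp.mono_set (by rw [Set.uIcc_of_le h2]; exact Set.Icc_subset_Icc h1 h3)).intervalIntegrable
  -- continuity and integrability of f
  have huIcc : Set.uIcc (0:ℝ) T = Set.Icc 0 T := Set.uIcc_of_le hT.le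
  have hFc : ContinuousOn (fun x => ∫ t in (0:ℝ)..x, g t) (Set.Icc 0 T) := by
    have := continuousOn_primitive_interval (a := 0) (b := T) (μ := volume) (f := g)
      (by rw [huIcc]; exact hg)
    rwa [huIcc] at this
  have hfc : ContinuousOn f (Set.Icc 0 T) := by
    have h1 : ContinuousOn (fun t => f 0 + ∫ s in (0:ℝ)..t, g s) (Set.Icc 0 T) :=
      (continuousOn_const (c := f 0)).add hFc
    exact h1.congr fun t ht => hf t ht
  have hfi : ∀ a b : ℝ, 0 ≤ a → a ≤ b → b ≤ T → IntervalIntegrable f volume a b := by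
    intro a b h1 h2 h3
    exact (hfc.mono (by rw [Set.uIcc_of_le h2]; exact Set.Icc_subset_Icc h1 h3)).intervalIntegrable
  have hfk0 : fk 0 = f 0 := by simp [hfk]
  have hfkpos : ∀ k : ℕ, k ≠ 0 →
      fk k = (1 / τ) • ∫ s in (((k:ℝ) - 1) * τ)..((k:ℝ) * τ), f s := by
    intro k hk
    simp [hfk, hk]
  -- key norm estimate
  have key : ∀ k : ℕ, 1 ≤ k → k ≤ m →
      ‖fk k - fk (k-1)‖ ≤ ∫ t in ((((k:ℝ) - 2) ⊔ 0) * τ)..((k:ℝ) * τ), ‖g t‖ := by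
    intro k hk1 hkm
    have hkT : (k:ℝ) * τ ≤ T := by
      rw [← hmτ]
      have : (k:ℝ) ≤ (m:ℝ) := by exact_mod_cast hkm
      nlinarith
    rcases eq_or_lt_of_le hk1 with h1 | h2
    · -- k = 1
      have hk : k = 1 := h1.symm
      subst hk
      have hb0 : (((1:ℕ):ℝ) - 1) * τ = 0 := by norm_num
      have hb1 : ((1:ℕ):ℝ) * τ = τ := by norm_num
      have ha : ((((1:ℕ):ℝ) - 2) ⊔ 0) * τ = 0 := by
        norm_num
      rw [show (1:ℕ) - 1 = 0 from rfl, hfk0, hfkpos 1 one_ne_zero, ha]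
      push_cast
      rw [show ((1:ℝ) - 1) * τ = 0 by ring, show (1:ℝ) * τ = τ by ring]
      have hτT : τ ≤ T := by
        rw [← hmτ]
        nlinarith
      have e1 : (1/τ) • (∫ s in (0:ℝ)..τ, f s) - f 0
          = (1/τ) • ∫ s in (0:ℝ)..τ, (f s - f 0) := by
        rw [integral_sub (hfi 0 τ le_rfl hτ.le hτT) intervalIntegrable_const,
          intervalIntegral.integral_const, smul_sub, smul_smul, sub_zero, one_div,
          inv_mul_cancel₀ hτ.ne', one_smul]
      rw [e1]
      have hbound : ∀ s ∈ Set.uIoc (0:ℝ) τ, ‖f s - f 0‖ ≤ ∫ t in (0:ℝ)..τ, ‖g t‖ := by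
        intro s hs
        rw [Set.uIoc_of_le hτ.le] at hs
        have hs0 : (0:ℝ) ≤ s := hs.1.le
        have hsτ : s ≤ τ := hs.2
        have hsT : s ∈ Set.Icc (0:ℝ) T := ⟨hs0, hsτ.trans hτT⟩
        have h0T : (0:ℝ) ∈ Set.Icc (0:ℝ) T := ⟨le_rfl, hT.le⟩
        rw [hf s hsT, hf 0 h0T]
        simp only [intervalIntegral.integral_same, add_zero, add_sub_cancel_left]
        calc ‖∫ r in (0:ℝ)..s, g r‖ ≤ ∫ r in (0:ℝ)..s, ‖g r‖ :=
              intervalIntegral.norm_integral_le_integral_norm hs0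
          _ ≤ ∫ t in (0:ℝ)..τ, ‖g t‖ := by
              apply intervalIntegral.integral_mono_interval le_rfl hs0 hsτ
              · exact Filter.Eventually.of_forall fun x => norm_nonneg _
              · exact hgni 0 τ le_rfl hτ.le hτT
      calc ‖(1/τ) • ∫ s in (0:ℝ)..τ, (f s - f 0)‖
          = (1/τ) * ‖∫ s in (0:ℝ)..τ, (f s - f 0)‖ := by
            rw [norm_smul, Real.norm_of_nonneg (by positivity)]
        _ ≤ (1/τ) * ((∫ t in (0:ℝ)..τ, ‖g t‖) * |τ - 0|) := by
            apply mul_le_mul_of_nonneg_left _ (by positivity)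
            exact intervalIntegral.norm_integral_le_of_norm_le_const hbound
        _ = ∫ t in (0:ℝ)..τ, ‖g t‖ := by
            rw [sub_zero, abs_of_pos hτ]
            field_simp
    · -- k ≥ 2
      have hk2 : 2 ≤ k := h2
      have hk2' : (2:ℝ) ≤ (k:ℝ) := by exact_mod_cast hk2
      have hmax : (((k:ℝ) - 2) ⊔ 0) = (k:ℝ) - 2 := max_eq_left (by linarith)
      have hcast : ((k - 1 : ℕ) : ℝ) = (k:ℝ) - 1 := by
        have : (1:ℕ) ≤ k := hk1
        push_cast [this]
        ring
      have hk10 : k - 1 ≠ 0 := by omega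
      rw [hfkpos k (by omega), hfkpos (k-1) hk10, hcast, hmax]
      -- bounds facts
      have h0a : (0:ℝ) ≤ ((k:ℝ) - 2) * τ := by nlinarith
      have hab : ((k:ℝ) - 2) * τ ≤ ((k:ℝ) - 1) * τ := by nlinarith
      have hbc : ((k:ℝ) - 1) * τ ≤ (k:ℝ) * τ := by nlinarith
      -- shift the (k-1)-st average
      have hshift : (∫ s in (((k:ℝ) - 1 - 1) * τ)..(((k:ℝ) - 1) * τ), f s)
          = ∫ s in (((k:ℝ) - 1) * τ)..((k:ℝ) * τ), f (s - τ) := by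
        rw [intervalIntegral.integral_comp_sub_right f τ]
        congr 1 <;> ring
      rw [hshift]
      have hint1 : IntervalIntegrable f volume (((k:ℝ) - 1) * τ) ((k:ℝ) * τ) :=
        hfi _ _ (by nlinarith) hbc hkT
      have hint2 : IntervalIntegrable (fun s => f (s - τ)) volume (((k:ℝ) - 1) * τ) ((k:ℝ) * τ) := by
        have := (hfi (((k:ℝ) - 2) * τ) (((k:ℝ) - 1) * τ) h0a hab (by linarith)).comp_sub_right τ
        rwa [show ((k:ℝ) - 2) * τ + τ = ((k:ℝ) - 1) * τ by ring,
          show ((k:ℝ) - 1) * τ + τ = (k:ℝ) * τ by ring] at this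
      rw [← smul_sub, ← integral_sub hint1 hint2]
      have hbound : ∀ s ∈ Set.uIoc (((k:ℝ) - 1) * τ) ((k:ℝ) * τ),
          ‖f s - f (s - τ)‖ ≤ ∫ t in (((k:ℝ) - 2) * τ)..((k:ℝ) * τ), ‖g t‖ := by
        intro s hs
        rw [Set.uIoc_of_le hbc] at hs
        have hs1 : ((k:ℝ) - 1) * τ < s := hs.1
        have hs2 : s ≤ (k:ℝ) * τ := hs.2
        have hsT : s ∈ Set.Icc (0:ℝ) T := ⟨by nlinarith, hs2.trans hkT⟩
        have hsτT : s - τ ∈ Set.Icc (0:ℝ) T := ⟨by nlinarith, by nlinarith⟩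
        rw [hf s hsT, hf (s - τ) hsτT]
        have e2 : f 0 + (∫ r in (0:ℝ)..s, g r) - (f 0 + ∫ r in (0:ℝ)..(s - τ), g r)
            = ∫ r in (s - τ)..s, g r := by
          rw [add_sub_add_left_eq_sub]
          exact intervalIntegral.integral_interval_sub_left
            (hgi 0 s le_rfl hsT.1 hsT.2) (hgi 0 (s - τ) le_rfl hsτT.1 hsτT.2)
        rw [e2]
        calc ‖∫ r in (s - τ)..s, g r‖ ≤ ∫ r in (s - τ)..s, ‖g r‖ :=
              intervalIntegral.norm_integral_le_integral_norm (by linarith [hτ.le])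
          _ ≤ ∫ t in (((k:ℝ) - 2) * τ)..((k:ℝ) * τ), ‖g t‖ := by
              apply intervalIntegral.integral_mono_interval (by nlinarith) (by linarith [hτ.le]) hs2
              · exact Filter.Eventually.of_forall fun x => norm_nonneg _
              · exact hgni _ _ h0a (by nlinarith) hkT
      calc ‖(1/τ) • ∫ s in (((k:ℝ) - 1) * τ)..((k:ℝ) * τ), (f s - f (s - τ))‖
          = (1/τ) * ‖∫ s in (((k:ℝ) - 1) * τ)..((k:ℝ) * τ), (f s - f (s - τ))‖ := by
            rw [norm_smul, Real.norm_of_nonneg (by positivity)]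
        _ ≤ (1/τ) * ((∫ t in (((k:ℝ) - 2) * τ)..((k:ℝ) * τ), ‖g t‖) * |(k:ℝ) * τ - ((k:ℝ) - 1) * τ|) := by
            apply mul_le_mul_of_nonneg_left _ (by positivity)
            exact intervalIntegral.norm_integral_le_of_norm_le_const hbound
        _ = ∫ t in (((k:ℝ) - 2) * τ)..((k:ℝ) * τ), ‖g t‖ := by
            rw [show (k:ℝ) * τ - ((k:ℝ) - 1) * τ = τ by ring, abs_of_pos hτ]
            field_simp
  -- second key estimate: Jensen
  have hnn : ∀ a b : ℝ, a ≤ b → (0:ℝ) ≤ ∫ t in a..b, ‖g t‖ ^ p := by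
    intro a b hab
    exact intervalIntegral.integral_nonneg hab fun u _ => Real.rpow_nonneg (norm_nonneg _) _
  have key2 : ∀ k ∈ Finset.Icc 1 m, ‖(1/τ) • (fk k - fk (k-1))‖ ^ p
      ≤ 2 ^ (p-1) * ((1/τ) * Eint g p τ k) := by
    intro k hk
    rw [Finset.mem_Icc] at hk
    obtain ⟨hk1, hkm⟩ := hk
    set a : ℝ := (((k:ℝ) - 2) ⊔ 0) * τ with ha
    set b : ℝ := (k:ℝ) * τ with hb
    have hk1' : (1:ℝ) ≤ (k:ℝ) := by exact_mod_cast hk1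
    have h0a : 0 ≤ a := mul_nonneg (le_max_right _ _) hτ.le
    have hab : a ≤ b := by
      apply mul_le_mul_of_nonneg_right _ hτ.le
      apply max_le (by linarith) (by linarith)
    have hbT : b ≤ T := by
      rw [← hmτ, hb]
      have : (k:ℝ) ≤ (m:ℝ) := by exact_mod_cast hkm
      nlinarith
    have hba2 : b - a ≤ 2 * τ := by
      have h1 : (k:ℝ) - 2 ≤ ((k:ℝ) - 2) ⊔ 0 := le_max_left _ _
      rw [ha, hb]
      nlinarith
    have Cnn : (0:ℝ) ≤ ∫ t in a..b, ‖g t‖ :=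
      intervalIntegral.integral_nonneg hab fun u _ => norm_nonneg _
    have Enn : (0:ℝ) ≤ Eint g p τ k := hnn a b hab
    have hsub : Set.Ioc a b ⊆ Set.Icc 0 T :=
      (Set.Ioc_subset_Icc_self).trans (Set.Icc_subset_Icc h0a hbT)
    have step1 : ‖(1/τ) • (fk k - fk (k-1))‖ ≤ (1/τ) * ∫ t in a..b, ‖g t‖ := by
      rw [norm_smul, Real.norm_of_nonneg (by positivity)]
      exact mul_le_mul_of_nonneg_left (key k hk1 hkm) (by positivity)
    have step4 : (∫ t in a..b, ‖g t‖) ^ p ≤ (b - a) ^ (p-1) * Eint g p τ k :=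
      jensen_aux p hp hab (hgn.mono_set hsub) (fun t => norm_nonneg _) (hgp.mono_set hsub)
    have step5 : (b - a) ^ (p-1) ≤ (2*τ) ^ (p-1) :=
      Real.rpow_le_rpow (by linarith) hba2 (by linarith)
    have step6 : ((1:ℝ)/τ) ^ p * (2*τ) ^ (p-1) = 2 ^ (p-1) * (1/τ) := by
      rw [Real.mul_rpow (by norm_num) hτ.le, one_div, Real.inv_rpow hτ.le,
        Real.rpow_sub hτ p 1, Real.rpow_one]
      have hτp : (0:ℝ) < τ ^ p := Real.rpow_pos_of_pos hτ p
      field_simp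
    calc ‖(1/τ) • (fk k - fk (k-1))‖ ^ p
        ≤ ((1/τ) * ∫ t in a..b, ‖g t‖) ^ p :=
          Real.rpow_le_rpow (norm_nonneg _) step1 (by linarith)
      _ = (1/τ) ^ p * (∫ t in a..b, ‖g t‖) ^ p :=
          Real.mul_rpow (by positivity) Cnn
      _ ≤ (1/τ) ^ p * ((b - a) ^ (p-1) * Eint g p τ k) :=
          mul_le_mul_of_nonneg_left step4 (by positivity)
      _ ≤ (1/τ) ^ p * ((2*τ) ^ (p-1) * Eint g p τ k) :=
          mul_le_mul_of_nonneg_left (mul_le_mul_of_nonneg_right step5 Enn) (by positivity)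
      _ = 2 ^ (p-1) * ((1/τ) * Eint g p τ k) := by
          rw [← mul_assoc, step6]
          ring
  -- splitting E into two J pieces
  have hbndk : ∀ k : ℕ, k ≤ m → (k:ℝ) * τ ≤ T := by
    intro k hkm
    rw [← hmτ]
    have : (k:ℝ) ≤ (m:ℝ) := by exact_mod_cast hkm
    nlinarith
  have hJE : ∀ k : ℕ, 1 ≤ k → k ≤ m → Eint g p τ k = Jint g p τ (k-1) + Jint g p τ k := by
    intro k hk1 hkm
    rcases eq_or_lt_of_le hk1 with h1 | h2
    · have hk : k = 1 := h1.symm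
      subst hk
      rw [show (1:ℕ) - 1 = 0 from rfl]
      simp only [Eint, Jint, if_pos rfl, if_neg one_ne_zero, zero_add]
      norm_num
    · have hk2 : (2:ℝ) ≤ (k:ℝ) := by exact_mod_cast h2
      have hcast : ((k - 1 : ℕ) : ℝ) = (k:ℝ) - 1 := by
        have : (1:ℕ) ≤ k := hk1
        push_cast [this]
        ring
      simp only [Eint, Jint, if_neg (by omega : k - 1 ≠ 0), if_neg (by omega : k ≠ 0), hcast]
      rw [show (((k:ℝ) - 2) ⊔ 0) = (k:ℝ) - 2 from max_eq_left (by linarith)]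
      rw [show (k:ℝ) - 1 - 1 = (k:ℝ) - 2 by ring]
      have hi1 : IntervalIntegrable (fun t => ‖g t‖ ^ p) volume (((k:ℝ) - 2) * τ) (((k:ℝ) - 1) * τ) :=
        hgpi _ _ (by nlinarith) (by nlinarith) (by
          have := hbndk k hkm; nlinarith)
      have hi2 : IntervalIntegrable (fun t => ‖g t‖ ^ p) volume (((k:ℝ) - 1) * τ) ((k:ℝ) * τ) :=
        hgpi _ _ (by nlinarith) (by nlinarith) (hbndk k hkm)
      exact (intervalIntegral.integral_add_adjacent_intervals hi1 hi2).symm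
  have hJnn : ∀ j : ℕ, 0 ≤ Jint g p τ j := by
    intro j
    by_cases hj : j = 0
    · simp [Jint, hj]
    · simp only [Jint, if_neg hj]
      exact intervalIntegral.integral_nonneg (by nlinarith) fun u _ =>
        Real.rpow_nonneg (norm_nonneg _) _
  -- telescoping sum
  have hconv : ∀ F : ℕ → ℝ, ∑ k ∈ Finset.Icc 1 m, F k = ∑ i ∈ Finset.range m, F (1 + i) := by
    intro F
    rw [← Finset.Ico_add_one_right_eq_Icc, Finset.sum_Ico_eq_sum_range]
    congr 1
  have hsum1 : ∑ k ∈ Finset.Icc 1 m, Jint g p τ k = ∫ t in (0:ℝ)..T, ‖g t‖ ^ p := by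
    rw [hconv]
    have hJs : ∀ i : ℕ, Jint g p τ (1 + i)
        = ∫ t in (((i:ℕ):ℝ) * τ)..((((i+1:ℕ)):ℝ) * τ), ‖g t‖ ^ p := by
      intro i
      simp only [Jint, if_neg (by omega : 1 + i ≠ 0)]
      congr 1 <;> push_cast <;> ring
    rw [Finset.sum_congr rfl fun i _ => hJs i]
    have hadj : ∀ i : ℕ, i < m → IntervalIntegrable (fun t => ‖g t‖ ^ p) volume
        (((i:ℕ):ℝ) * τ) ((((i+1:ℕ)):ℝ) * τ) := by
      intro i him
      refine hgpi _ _ (by positivity) ?_ (hbndk (i+1) (by omega))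
      have : ((i:ℕ):ℝ) ≤ (((i+1:ℕ)):ℝ) := by exact_mod_cast Nat.le_succ i
      nlinarith
    have := intervalIntegral.sum_integral_adjacent_intervals
      (a := fun i : ℕ => ((i:ℕ):ℝ) * τ) (f := fun t => ‖g t‖ ^ p) (μ := volume) (n := m) hadj
    rw [this]
    norm_num [hmτ]
  have hsum0 : ∑ k ∈ Finset.Icc 1 m, Jint g p τ (k-1) ≤ ∑ k ∈ Finset.Icc 1 m, Jint g p τ k := by
    rw [hconv (fun k => Jint g p τ (k-1)), hconv (fun k => Jint g p τ k)]
    rw [Finset.sum_congr rfl (fun i _ => show Jint g p τ (1 + i - 1) = Jint g p τ i by congr 1; omega),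
      Finset.sum_congr rfl (fun i _ => show Jint g p τ (1 + i) = Jint g p τ (i + 1) by congr 1; omega)]
    obtain ⟨n, hn⟩ : ∃ n, m = n + 1 := ⟨m - 1, by omega⟩
    subst hn
    rw [Finset.sum_range_succ' (fun i => Jint g p τ i) n]
    rw [show Jint g p τ 0 = 0 from by simp [Jint], add_zero]
    exact Finset.sum_le_sum_of_subset_of_nonneg (Finset.range_subset_range.2 (Nat.le_succ n))
      (fun j _ _ => hJnn _)
  -- final assembly
  have hE2 : ∑ k ∈ Finset.Icc 1 m, Eint g p τ k ≤ 2 * ∫ t in (0:ℝ)..T, ‖g t‖ ^ p := by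
    calc ∑ k ∈ Finset.Icc 1 m, Eint g p τ k
        = ∑ k ∈ Finset.Icc 1 m, (Jint g p τ (k-1) + Jint g p τ k) := by
          refine Finset.sum_congr rfl fun k hk => ?_
          rw [Finset.mem_Icc] at hk
          exact hJE k hk.1 hk.2
      _ = (∑ k ∈ Finset.Icc 1 m, Jint g p τ (k-1)) + ∑ k ∈ Finset.Icc 1 m, Jint g p τ k :=
          Finset.sum_add_distrib
      _ ≤ (∑ k ∈ Finset.Icc 1 m, Jint g p τ k) + ∑ k ∈ Finset.Icc 1 m, Jint g p τ k :=
          add_le_add_left hsum0 _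
      _ = 2 * ∫ t in (0:ℝ)..T, ‖g t‖ ^ p := by rw [hsum1]; ring
  have hIp : (0:ℝ) ≤ ∫ t in (0:ℝ)..T, ‖g t‖ ^ p := hnn 0 T hT.le
  calc τ * ∑ k ∈ Finset.Icc 1 m, ‖(1/τ) • (fk k - fk (k-1))‖ ^ p
      ≤ τ * ∑ k ∈ Finset.Icc 1 m, 2 ^ (p-1) * ((1/τ) * Eint g p τ k) :=
        mul_le_mul_of_nonneg_left (Finset.sum_le_sum key2) hτ.le
    _ = 2 ^ (p-1) * ∑ k ∈ Finset.Icc 1 m, Eint g p τ k := by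
        rw [Finset.mul_sum, Finset.mul_sum]
        refine Finset.sum_congr rfl fun k _ => ?_
        rw [show τ * (2 ^ (p-1) * (1/τ * Eint g p τ k))
            = 2 ^ (p-1) * ((τ * (1/τ)) * Eint g p τ k) from by ring,
          mul_one_div_cancel hτ.ne', one_mul]
    _ ≤ 2 ^ (p-1) * (2 * ∫ t in (0:ℝ)..T, ‖g t‖ ^ p) :=
        mul_le_mul_of_nonneg_left hE2 (Real.rpow_nonneg (by norm_num) _)
    _ = (2:ℝ) ^ p * ∫ t in (0:ℝ)..T, ‖g t‖ ^ p := by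
        rw [show (2:ℝ) * ∫ t in (0:ℝ)..T, ‖g t‖ ^ p = 2 ^ (1:ℝ) * ∫ t in (0:ℝ)..T, ‖g t‖ ^ p by
          rw [Real.rpow_one], ← mul_assoc, ← Real.rpow_add (by norm_num : (0:ℝ) < 2)]
        ring_nf
end

section
/- Let B be a real Banach space, T > 0, m ∈ ℕ with m ≥ 1, τ := T/m and t_k := k·τ for k = 0, …, m. Let g : [0,T] → B be Bochner integrable with ∫₀^T ‖g(t)‖_B² dt < ∞, and let f : [0,T] → B satisfy f(t) = f(0) + ∫₀ᵗ g(s) ds for all t ∈ [0,T]. Define f_k := (1/τ)·∫_{t_{k−1}}^{t_k} f(s) ds for k = 1, …, m, f₀ := f(0), the piecewise linear interpolant f_τ(t) := f_{k−1} + ((t − t_{k−1})/τ)·(f_k − f_{k−1}) and the piecewise constant interpolant f̄_τ(t) := f_k for t ∈ (t_{k−1}, t_k]. Then for every t ∈ (0,T], ‖f_τ(t) − f̄_τ(t)‖_B ≤ (2τ)^{1/2}·(∫₀^T ‖g(r)‖_B² dr)^{1/2}. -/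
open MeasureTheory intervalIntegral
set_option maxHeartbeats 1000000

lemma keyA {B : Type*} [NormedAddCommGroup B] [NormedSpace ℝ B] [CompleteSpace B]
    {T : ℝ} (hT : 0 ≤ T) {g : ℝ → B}
    (hg : IntegrableOn g (Set.Icc 0 T))
    (hg2 : IntegrableOn (fun t => ‖g t‖ ^ 2) (Set.Icc 0 T))
    {a b : ℝ} (ha : 0 ≤ a) (hab : a ≤ b) (hbT : b ≤ T) :
    ‖∫ s in a..b, g s‖ ≤
      (b - a) ^ ((1 : ℝ) / 2) * (∫ r in (0 : ℝ)..T, ‖g r‖ ^ 2) ^ ((1 : ℝ) / 2) := by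
  have hsub : Set.Ioc a b ⊆ Set.Icc 0 T := fun x hx => ⟨ha.trans hx.1.le, hx.2.trans hbT⟩
  set μ := volume.restrict (Set.Ioc a b) with hμ
  haveI : IsFiniteMeasure μ := ⟨by
    rw [hμ, Measure.restrict_apply_univ, Real.volume_Ioc]; exact ENNReal.ofReal_lt_top⟩
  have hmeas : AEStronglyMeasurable (fun s => ‖g s‖) μ :=
    ((hg.mono_set hsub).aestronglyMeasurable).norm
  have hmem : MemLp (fun s => ‖g s‖) 2 μ := by
    refine (memLp_two_iff_integrable_sq hmeas).2 ?_
    exact hg2.mono_set hsub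
  have hmem' : MemLp (fun s => ‖g s‖) (ENNReal.ofReal 2) μ := by
    simpa [ENNReal.ofReal_ofNat] using hmem
  have hone : MemLp (fun _ : ℝ => (1 : ℝ)) (ENNReal.ofReal 2) μ := memLp_const 1
  have hpq : Real.HolderConjugate 2 2 := Real.HolderConjugate.two_two
  have hH := integral_mul_le_Lp_mul_Lq_of_nonneg (μ := μ) hpq
      (Filter.Eventually.of_forall fun x => norm_nonneg _)
      (Filter.Eventually.of_forall fun x => zero_le_one) hmem' hone
  simp only [mul_one] at hH
  have h2 : (∫ s, ‖g s‖ ^ (2:ℝ) ∂μ) = ∫ s, ‖g s‖ ^ 2 ∂μ := by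
    simp [Real.rpow_two]
  have h3 : (∫ _ : ℝ, (1:ℝ) ^ (2:ℝ) ∂μ) = b - a := by
    simp [hμ, Real.volume_Ioc, ENNReal.toReal_ofReal (sub_nonneg.2 hab), hab]
  rw [h2, h3] at hH
  have hmono : (∫ s, ‖g s‖ ^ 2 ∂μ) ≤ ∫ s in Set.Ioc 0 T, ‖g s‖ ^ 2 := by
    refine setIntegral_mono_set (hg2.mono_set Set.Ioc_subset_Icc_self)
      (Filter.Eventually.of_forall fun x => by positivity)
      (HasSubset.Subset.eventuallyLE (Set.Ioc_subset_Ioc ha hbT))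
  have hGnn : 0 ≤ ∫ s, ‖g s‖ ^ 2 ∂μ := integral_nonneg fun x => by positivity
  have hrw : (∫ r in (0:ℝ)..T, ‖g r‖ ^ 2) = ∫ s in Set.Ioc 0 T, ‖g s‖ ^ 2 :=
    intervalIntegral.integral_of_le hT
  calc ‖∫ s in a..b, g s‖ ≤ ∫ s in a..b, ‖g s‖ :=
        intervalIntegral.norm_integral_le_integral_norm hab
    _ = ∫ s, ‖g s‖ ∂μ := intervalIntegral.integral_of_le hab
    _ ≤ (∫ s, ‖g s‖ ^ 2 ∂μ) ^ ((1:ℝ)/2) * (b - a) ^ ((1:ℝ)/2) := hH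
    _ ≤ (∫ r in (0:ℝ)..T, ‖g r‖ ^ 2) ^ ((1:ℝ)/2) * (b - a) ^ ((1:ℝ)/2) := by
        gcongr
        · rw [hrw]; exact hmono
    _ = (b - a) ^ ((1:ℝ)/2) * (∫ r in (0:ℝ)..T, ‖g r‖ ^ 2) ^ ((1:ℝ)/2) := mul_comm _ _

/-- The uniform-in-time distance between the piecewise linear and piecewise
constant interpolants of the local averages `f_k` is at most
`(2τ)^{1/2} (∫₀^T ‖g‖² dt)^{1/2}`. For `t ∈ (t_{k-1}, t_k]` one has
`⌈t/τ⌉ = k`. -/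
theorem stmt12 {B : Type*} [NormedAddCommGroup B] [NormedSpace ℝ B] [CompleteSpace B]
    (T : ℝ) (hT : 0 < T) (m : ℕ) (hm : 1 ≤ m) (g f : ℝ → B)
    (hg : IntegrableOn g (Set.Icc 0 T))
    (hg2 : IntegrableOn (fun t => ‖g t‖ ^ 2) (Set.Icc 0 T))
    (hf : ∀ t ∈ Set.Icc (0 : ℝ) T, f t = f 0 + ∫ s in (0 : ℝ)..t, g s) :
    let τ : ℝ := T / m
    let fk : ℕ → B := fun k =>
      if k = 0 then f 0 else (1 / τ) • ∫ s in (((k : ℝ) - 1) * τ)..((k : ℝ) * τ), f s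
    ∀ t ∈ Set.Ioc (0 : ℝ) T,
      ‖(fk (⌈t / τ⌉₊ - 1) +
            ((t - ((⌈t / τ⌉₊ : ℝ) - 1) * τ) / τ) • (fk ⌈t / τ⌉₊ - fk (⌈t / τ⌉₊ - 1))) -
          fk ⌈t / τ⌉₊‖ ≤
        (2 * τ) ^ ((1 : ℝ) / 2) * (∫ r in (0 : ℝ)..T, ‖g r‖ ^ 2) ^ ((1 : ℝ) / 2) := by
  intro τ fk t ht
  obtain ⟨ht0, htT⟩ := ht
  have hmR : (0 : ℝ) < m := by exact_mod_cast Nat.lt_of_lt_of_le Nat.zero_lt_one hm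
  have hτ : 0 < τ := div_pos hT hmR
  have hTm : (m : ℝ) * τ = T := by
    show (m : ℝ) * (T / m) = T
    field_simp
  set G : ℝ := (∫ r in (0 : ℝ)..T, ‖g r‖ ^ 2) ^ ((1 : ℝ) / 2) with hGdef
  have hIntnn : 0 ≤ ∫ r in (0 : ℝ)..T, ‖g r‖ ^ 2 :=
    intervalIntegral.integral_nonneg hT.le (fun x _ => by positivity)
  have hG0 : 0 ≤ G := Real.rpow_nonneg hIntnn _
  set k := ⌈t / τ⌉₊ with hkdef
  have hk1 : 1 ≤ k := Nat.one_le_ceil_iff.2 (div_pos ht0 hτ)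
  have hkm : k ≤ m := Nat.ceil_le.2 (by
    rw [div_le_iff₀ hτ]
    calc t ≤ T := htT
    _ = (m : ℝ) * τ := hTm.symm)
  have hlow : ((k : ℝ) - 1) * τ < t := by
    have hlt : k - 1 < ⌈t / τ⌉₊ := by rw [← hkdef]; omega
    have h1 : ((k - 1 : ℕ) : ℝ) < t / τ := Nat.lt_ceil.1 hlt
    have h2 : ((k - 1 : ℕ) : ℝ) = (k : ℝ) - 1 := by
      push_cast [Nat.cast_sub hk1]; ring
    rw [h2] at h1
    calc ((k : ℝ) - 1) * τ < (t / τ) * τ := by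
          exact mul_lt_mul_of_pos_right h1 hτ
    _ = t := div_mul_cancel₀ t hτ.ne'
  have hup : t ≤ (k : ℝ) * τ := by
    have := Nat.le_ceil (t / τ)
    calc t = (t / τ) * τ := (div_mul_cancel₀ t hτ.ne').symm
    _ ≤ (k : ℝ) * τ := mul_le_mul_of_nonneg_right this hτ.le
  -- F is the primitive of g
  set F : ℝ → B := fun s => ∫ u in (0 : ℝ)..s, g u with hFdef
  have hFcont : ContinuousOn F (Set.Icc 0 T) := by
    have := intervalIntegral.continuousOn_primitive_interval
      (a := (0:ℝ)) (b := T) (μ := volume) (f := g)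
      (by simpa [Set.uIcc_of_le hT.le] using hg)
    simpa [Set.uIcc_of_le hT.le] using this
  have hFdiff : ∀ a b : ℝ, 0 ≤ a → a ≤ b → b ≤ T →
      ‖F b - F a‖ ≤ (b - a) ^ ((1 : ℝ) / 2) * G := by
    intro a b ha hab hbT
    have hia : IntervalIntegrable g volume 0 a :=
      (hg.mono_set (by rw [Set.uIcc_of_le ha]; exact Set.Icc_subset_Icc le_rfl (hab.trans hbT))).intervalIntegrable
    have hib : IntervalIntegrable g volume 0 b :=
      (hg.mono_set (by rw [Set.uIcc_of_le (ha.trans hab)]; exact Set.Icc_subset_Icc le_rfl hbT)).intervalIntegrable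
    have : F b - F a = ∫ u in a..b, g u :=
      intervalIntegral.integral_interval_sub_left hib hia
    rw [this]
    exact keyA hT.le hg hg2 ha hab hbT
  have hF0 : F 0 = 0 := intervalIntegral.integral_same
  -- the average formula
  have hfave : ∀ j : ℕ, 1 ≤ j → j ≤ m →
      fk j = f 0 + (1 / τ) • ∫ s in (((j : ℝ) - 1) * τ)..((j : ℝ) * τ), F s := by
    intro j hj1 hjm
    have hj0 : (1 : ℝ) ≤ (j : ℝ) := by exact_mod_cast hj1
    have ha0 : 0 ≤ ((j : ℝ) - 1) * τ := mul_nonneg (by linarith) hτ.le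
    have hab : ((j : ℝ) - 1) * τ ≤ (j : ℝ) * τ := by nlinarith
    have hbT : (j : ℝ) * τ ≤ T := by
      rw [← hTm]
      have : (j : ℝ) ≤ (m : ℝ) := by exact_mod_cast hjm
      nlinarith
    have hsub : Set.uIcc (((j : ℝ) - 1) * τ) ((j : ℝ) * τ) ⊆ Set.Icc 0 T := by
      rw [Set.uIcc_of_le hab]
      exact Set.Icc_subset_Icc ha0 hbT
    have hFi : IntervalIntegrable F volume (((j : ℝ) - 1) * τ) ((j : ℝ) * τ) :=
      (hFcont.mono hsub).intervalIntegrable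
    have hcongr : (∫ s in (((j : ℝ) - 1) * τ)..((j : ℝ) * τ), f s)
        = ∫ s in (((j : ℝ) - 1) * τ)..((j : ℝ) * τ), (f 0 + F s) := by
      refine intervalIntegral.integral_congr (fun s hs => ?_)
      exact hf s (hsub hs)
    have hsplit : (∫ s in (((j : ℝ) - 1) * τ)..((j : ℝ) * τ), (f 0 + F s))
        = τ • f 0 + ∫ s in (((j : ℝ) - 1) * τ)..((j : ℝ) * τ), F s := by
      rw [intervalIntegral.integral_add intervalIntegrable_const hFi,
        intervalIntegral.integral_const]
      congr 1
      have : (j : ℝ) * τ - ((j : ℝ) - 1) * τ = τ := by ring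
      rw [this]
    have hj0' : j ≠ 0 := by omega
    show (if j = 0 then f 0 else
        (1 / τ) • ∫ s in (((j : ℝ) - 1) * τ)..((j : ℝ) * τ), f s) = _
    rw [if_neg hj0', hcongr, hsplit, smul_add, smul_smul]
    congr 1
    rw [one_div_mul_cancel hτ.ne', one_smul]
  -- main bound on consecutive differences
  have hB : ‖fk k - fk (k - 1)‖ ≤ τ ^ ((1 : ℝ) / 2) * G := by
    rcases eq_or_lt_of_le hk1 with h1 | h2
    · -- k = 1
      have hk : k = 1 := h1.symm
      have hfk0 : fk 0 = f 0 := by simp [fk]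
      have hfk1 : fk 1 = f 0 + (1 / τ) • ∫ s in (0 : ℝ)..τ, F s := by
        have := hfave 1 le_rfl hm
        simpa using this
      have hτT : τ ≤ T := by
        rw [← hTm]
        have : (1 : ℝ) ≤ (m : ℝ) := by exact_mod_cast hm
        nlinarith
      have hbound : ∀ s ∈ Set.uIoc (0 : ℝ) τ, ‖F s‖ ≤ τ ^ ((1 : ℝ) / 2) * G := by
        intro s hs
        rw [Set.uIoc_of_le hτ.le] at hs
        have h1 := hFdiff 0 s le_rfl hs.1.le (hs.2.trans hτT)
        rw [hF0, sub_zero, sub_zero] at h1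
        refine h1.trans ?_
        exact mul_le_mul_of_nonneg_right
          (Real.rpow_le_rpow hs.1.le hs.2 (by norm_num)) hG0
      have hnorm : ‖∫ s in (0 : ℝ)..τ, F s‖ ≤ τ ^ ((1 : ℝ) / 2) * G * |τ - 0| :=
        intervalIntegral.norm_integral_le_of_norm_le_const hbound
      rw [hk, hfk1, hfk0]
      have : f 0 + (1 / τ) • (∫ s in (0 : ℝ)..τ, F s) - f 0
          = (1 / τ) • ∫ s in (0 : ℝ)..τ, F s := by abel
      rw [this, norm_smul, Real.norm_eq_abs, abs_of_pos (one_div_pos.2 hτ)]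
      calc (1 / τ) * ‖∫ s in (0 : ℝ)..τ, F s‖
          ≤ (1 / τ) * (τ ^ ((1 : ℝ) / 2) * G * |τ - 0|) :=
            mul_le_mul_of_nonneg_left hnorm (one_div_pos.2 hτ).le
        _ = (τ / τ) * (τ ^ ((1 : ℝ) / 2) * G) := by
            rw [sub_zero, abs_of_pos hτ]; ring
        _ = τ ^ ((1 : ℝ) / 2) * G := by rw [div_self hτ.ne', one_mul]
    · -- k ≥ 2
      have hk2 : 2 ≤ k := h2
      have hk2R : (2 : ℝ) ≤ (k : ℝ) := by exact_mod_cast hk2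
      set a := ((k : ℝ) - 2) * τ with hadef
      set b := ((k : ℝ) - 1) * τ with hbdef
      set c := (k : ℝ) * τ with hcdef
      have ha0 : 0 ≤ a := mul_nonneg (by linarith) hτ.le
      have hab : a ≤ b := by rw [hadef, hbdef]; nlinarith
      have hbc : b ≤ c := by rw [hbdef, hcdef]; nlinarith
      have hcT : c ≤ T := by
        rw [← hTm, hcdef]
        have : (k : ℝ) ≤ (m : ℝ) := by exact_mod_cast hkm
        nlinarith
      have haτ : a + τ = b := by rw [hadef, hbdef]; ring
      have hbτ : b + τ = c := by rw [hbdef, hcdef]; ring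
      have hkk : ((k - 1 : ℕ) : ℝ) = (k : ℝ) - 1 := by
        push_cast [Nat.cast_sub hk1]; ring
      have hfkk : fk k = f 0 + (1 / τ) • ∫ s in b..c, F s := hfave k hk1 hkm
      have hfkm : fk (k - 1) = f 0 + (1 / τ) • ∫ s in a..b, F s := by
        have := hfave (k - 1) (by omega) (by omega)
        rw [hkk] at this
        have h2 : ((k : ℝ) - 1) - 1 = (k : ℝ) - 2 := by ring
        rw [h2] at this
        exact this
      -- shift the integral
      have hshift : (∫ s in b..c, F s) = ∫ s in a..b, F (s + τ) := by
        rw [intervalIntegral.integral_comp_add_right (f := F) (d := τ), haτ, hbτ]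
      have hFi1 : IntervalIntegrable F volume a b := by
        refine (hFcont.mono ?_).intervalIntegrable
        rw [Set.uIcc_of_le hab]
        exact Set.Icc_subset_Icc ha0 (hbc.trans hcT)
      have hFi2 : IntervalIntegrable (fun s => F (s + τ)) volume a b := by
        have hc : ContinuousOn (fun s => F (s + τ)) (Set.Icc a b) := by
          refine hFcont.comp ((continuous_add_right τ).continuousOn) ?_
          intro x hx
          have hx1 := hx.1
          have hx2 := hx.2
          show x + τ ∈ Set.Icc 0 T
          constructor
          · linarith
          · have h3 : x + τ ≤ b + τ := by linarith
            rw [hbτ] at h3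
            exact h3.trans hcT
        refine (hc.mono ?_).intervalIntegrable
        rw [Set.uIcc_of_le hab]
      have hdiff : fk k - fk (k - 1) = (1 / τ) • ∫ s in a..b, (F (s + τ) - F s) := by
        rw [hfkk, hfkm, hshift, intervalIntegral.integral_sub hFi2 hFi1, smul_sub]
        abel
      have hbound : ∀ s ∈ Set.uIoc a b, ‖F (s + τ) - F s‖ ≤ τ ^ ((1 : ℝ) / 2) * G := by
        intro s hs
        rw [Set.uIoc_of_le hab] at hs
        have hs0 : 0 ≤ s := ha0.trans hs.1.le
        have hsτ : s + τ ≤ T := by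
          have : s + τ ≤ b + τ := by linarith [hs.2]
          rw [hbτ] at this
          exact this.trans hcT
        have h1 := hFdiff s (s + τ) hs0 (by linarith) hsτ
        have : s + τ - s = τ := by ring
        rwa [this] at h1
      have hnorm : ‖∫ s in a..b, (F (s + τ) - F s)‖ ≤ τ ^ ((1 : ℝ) / 2) * G * |b - a| :=
        intervalIntegral.norm_integral_le_of_norm_le_const hbound
      have hba : |b - a| = τ := by
        rw [hbdef, hadef, abs_of_nonneg (by nlinarith)]
        ring
      rw [hdiff, norm_smul, Real.norm_eq_abs, abs_of_pos (one_div_pos.2 hτ)]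
      calc (1 / τ) * ‖∫ s in a..b, (F (s + τ) - F s)‖
          ≤ (1 / τ) * (τ ^ ((1 : ℝ) / 2) * G * |b - a|) :=
            mul_le_mul_of_nonneg_left hnorm (one_div_pos.2 hτ).le
        _ = (τ / τ) * (τ ^ ((1 : ℝ) / 2) * G) := by rw [hba]; ring
        _ = τ ^ ((1 : ℝ) / 2) * G := by rw [div_self hτ.ne', one_mul]
  -- assemble
  set θ : ℝ := (t - ((k : ℝ) - 1) * τ) / τ with hθdef
  have hθpos : 0 < θ := div_pos (by linarith) hτ
  have hθle : θ ≤ 1 := by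
    rw [hθdef, div_le_one hτ]
    nlinarith
  have hiden : fk (k - 1) + θ • (fk k - fk (k - 1)) - fk k
      = (1 - θ) • (fk (k - 1) - fk k) := by
    module
  rw [hiden, norm_smul, Real.norm_eq_abs, abs_of_nonneg (by linarith), norm_sub_rev]
  calc (1 - θ) * ‖fk k - fk (k - 1)‖ ≤ 1 * (τ ^ ((1 : ℝ) / 2) * G) := by
        refine mul_le_mul (by linarith) hB (norm_nonneg _) zero_le_one
    _ = τ ^ ((1 : ℝ) / 2) * G := one_mul _
    _ ≤ (2 * τ) ^ ((1 : ℝ) / 2) * G :=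
        mul_le_mul_of_nonneg_right
          (Real.rpow_le_rpow hτ.le (by linarith) (by norm_num)) hG0
end
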